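/- arXiv:0806.3739 — 2 statements merged into one kernel-verified Lean document; each statement's English description precedes it below -/
import Mathlib

section
/- For every k ≥ 1, the partitions μ = (k+1, …, k+1, k−1) with k parts equal to k+1, and λ = (k+1, …, k+1, k, k) with k−1 parts equal to k+1, are distinct partitions of n = k²+2k−1 with exactly the same set of k-deletions. -/
/-- A partition: a nonincreasing sequence of naturals (rows indexed from 0),
with finitely many nonzero parts. -/
def IsPartition (f : ℕ → ℕ) : Prop :=
  (∀ ⦃i j : ℕ⦄, i ≤ j → f j ≤ f i) ∧ {i | f i ≠ 0}.Finite

/-- The number of cells of a partition. -/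
noncomputable def psize (f : ℕ → ℕ) : ℕ := ∑ᶠ i, f i

/-- `δ` is a `k`-deletion of `f`: a partition contained in `f` with `k` fewer cells. -/
def IsDeletion (k : ℕ) (δ f : ℕ → ℕ) : Prop :=
  IsPartition δ ∧ (∀ i, δ i ≤ f i) ∧ psize f = psize δ + k

/-- The conjugate: `conj f c` is the number of cells in (0-indexed) column `c`. -/
noncomputable def conj (f : ℕ → ℕ) (c : ℕ) : ℕ := Set.ncard {i | c < f i}

lemma psize_eq_sum_range (f : ℕ → ℕ) (N : ℕ) (h : ∀ i, N ≤ i → f i = 0) :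
    psize f = ∑ i ∈ Finset.range N, f i := by
  apply finsum_eq_finset_sum_of_support_subset
  intro i hi
  simp only [Function.mem_support] at hi
  simp only [Finset.coe_range, Set.mem_Iio]
  by_contra hc
  exact hi (h i (by omega))

/-- The sharp counterexample: μ = (k+1,…,k+1,k−1) (k copies of k+1) and
λ = (k+1,…,k+1,k,k) (k−1 copies of k+1) are distinct partitions of k²+2k−1
with the same set of k-deletions. -/
theorem sharp_pair (k : ℕ) (hk : 1 ≤ k) :
    let μ : ℕ → ℕ := fun i => if i < k then k + 1 else if i = k then k - 1 else 0
    let lam : ℕ → ℕ := fun i => if i < k - 1 then k + 1 else if i < k + 1 then k else 0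
    IsPartition μ ∧ IsPartition lam ∧ μ ≠ lam ∧
      psize μ = k ^ 2 + 2 * k - 1 ∧ psize lam = k ^ 2 + 2 * k - 1 ∧
      (∀ δ : ℕ → ℕ, IsDeletion k δ μ ↔ IsDeletion k δ lam) := by
  intro μ lam
  obtain ⟨m, rfl⟩ : ∃ m, k = m + 1 := ⟨k - 1, by omega⟩
  have hμ0 : ∀ i, m + 2 ≤ i → μ i = 0 := by
    intro i hi; simp only [μ]; rw [if_neg (by omega), if_neg (by omega)]
  have hlam0 : ∀ i, m + 2 ≤ i → lam i = 0 := by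
    intro i hi; simp only [lam]; rw [if_neg (by omega), if_neg (by omega)]
  have hμpart : IsPartition μ := by
    constructor
    · intro i j hij; simp only [μ]; split_ifs <;> omega
    · exact Set.Finite.subset (Set.finite_Iio (m + 2)) fun i hi => by
        simp only [Set.mem_setOf_eq] at hi
        simp only [Set.mem_Iio]
        by_contra hc; exact hi (hμ0 i (by omega))
  have hlampart : IsPartition lam := by
    constructor
    · intro i j hij; simp only [lam]; split_ifs <;> omega
    · exact Set.Finite.subset (Set.finite_Iio (m + 2)) fun i hi => by
        simp only [Set.mem_setOf_eq] at hi
        simp only [Set.mem_Iio]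
        by_contra hc; exact hi (hlam0 i (by omega))
  have hμtop : μ (m + 1) = m := by
    simp only [μ]; rw [if_neg (by omega), if_pos trivial]; omega
  have hlamm : lam m = m + 1 := by
    simp only [lam]; rw [if_neg (by omega), if_pos (by omega)]
  have hlamtop : lam (m + 1) = m + 1 := by
    simp only [lam]; rw [if_neg (by omega), if_pos (by omega)]
  have hne : μ ≠ lam := by
    intro h
    rw [h] at hμtop
    omega
  have hμsum : psize μ = (m + 1) ^ 2 + 2 * (m + 1) - 1 := by
    rw [psize_eq_sum_range μ (m + 2) hμ0, Finset.sum_range_succ]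
    have h1 : ∑ i ∈ Finset.range (m + 1), μ i = ∑ _i ∈ Finset.range (m + 1), (m + 2) := by
      apply Finset.sum_congr rfl
      intro i hi
      simp only [Finset.mem_range] at hi
      simp only [μ]; rw [if_pos hi]
    rw [h1, hμtop, Finset.sum_const, Finset.card_range, smul_eq_mul]
    have e1 : (m + 1) * (m + 2) = m ^ 2 + 3 * m + 2 := by ring
    have e2 : (m + 1) ^ 2 + 2 * (m + 1) = m ^ 2 + 4 * m + 3 := by ring
    omega
  have hlamsum : psize lam = (m + 1) ^ 2 + 2 * (m + 1) - 1 := by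
    rw [psize_eq_sum_range lam (m + 2) hlam0, Finset.sum_range_succ, Finset.sum_range_succ]
    have h1 : ∑ i ∈ Finset.range m, lam i = ∑ _i ∈ Finset.range m, (m + 2) := by
      apply Finset.sum_congr rfl
      intro i hi
      simp only [Finset.mem_range] at hi
      simp only [lam]; rw [if_pos (by omega)]
    rw [h1, hlamm, hlamtop, Finset.sum_const, Finset.card_range, smul_eq_mul]
    have e1 : m * (m + 2) = m ^ 2 + 2 * m := by ring
    have e2 : (m + 1) ^ 2 + 2 * (m + 1) = m ^ 2 + 4 * m + 3 := by ring
    omega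
  refine ⟨hμpart, hlampart, hne, hμsum, hlamsum, ?_⟩
  intro δ
  have e2 : (m + 1) ^ 2 + 2 * (m + 1) = m ^ 2 + 4 * m + 3 := by ring
  constructor
  · rintro ⟨hδp, hle, hsize⟩
    have hδ0 : ∀ i, m + 2 ≤ i → δ i = 0 := fun i hi =>
      Nat.le_zero.mp (hμ0 i hi ▸ hle i)
    have hδsum : ∑ i ∈ Finset.range (m + 2), δ i = m ^ 2 + 3 * m + 1 := by
      have heq := psize_eq_sum_range δ (m + 2) hδ0
      rw [hμsum, heq] at hsize
      omega
    -- key: δ m ≤ m + 1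
    have hkey : δ m ≤ m + 1 := by
      by_contra h
      push_neg at h
      have hall : ∀ i ∈ Finset.range (m + 1), m + 2 ≤ δ i := by
        intro i hi
        simp only [Finset.mem_range] at hi
        exact le_trans h (hδp.1 (show i ≤ m by omega))
      have h1 : (m + 1) * (m + 2) ≤ ∑ i ∈ Finset.range (m + 1), δ i := by
        calc (m + 1) * (m + 2) = ∑ _i ∈ Finset.range (m + 1), (m + 2) := by
              rw [Finset.sum_const, Finset.card_range, smul_eq_mul]
          _ ≤ _ := Finset.sum_le_sum hall
      have h2 : ∑ i ∈ Finset.range (m + 1), δ i ≤ ∑ i ∈ Finset.range (m + 2), δ i :=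
        Finset.sum_le_sum_of_subset (Finset.range_subset_range.mpr (by omega))
      have h3 : (m + 1) * (m + 2) = m ^ 2 + 3 * m + 2 := by ring
      omega
    refine ⟨hδp, ?_, ?_⟩
    · intro i
      show δ i ≤ lam i
      simp only [lam]
      split_ifs with h1 h2
      · have hμi : μ i = m + 2 := by simp only [μ]; rw [if_pos (by omega)]
        have := hle i; omega
      · have := le_trans (hδp.1 (show m ≤ i by omega)) hkey
        omega
      · exact le_of_eq (hδ0 i (by omega))
    · rw [hlamsum, psize_eq_sum_range δ (m + 2) hδ0, hδsum]
      omega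
  · rintro ⟨hδp, hle, hsize⟩
    have hδ0 : ∀ i, m + 2 ≤ i → δ i = 0 := fun i hi =>
      Nat.le_zero.mp (hlam0 i hi ▸ hle i)
    have hδsum : ∑ i ∈ Finset.range (m + 2), δ i = m ^ 2 + 3 * m + 1 := by
      have heq := psize_eq_sum_range δ (m + 2) hδ0
      rw [hlamsum, heq] at hsize
      omega
    -- key: δ (m+1) ≤ m
    have hkey : δ (m + 1) ≤ m := by
      by_contra h
      push_neg at h
      have hall : ∀ i ∈ Finset.range (m + 2), m + 1 ≤ δ i := by
        intro i hi
        simp only [Finset.mem_range] at hi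
        exact le_trans (by omega) (hδp.1 (show i ≤ m + 1 by omega))
      have h1 : (m + 2) * (m + 1) ≤ ∑ i ∈ Finset.range (m + 2), δ i := by
        calc (m + 2) * (m + 1) = ∑ _i ∈ Finset.range (m + 2), (m + 1) := by
              rw [Finset.sum_const, Finset.card_range, smul_eq_mul]
          _ ≤ _ := Finset.sum_le_sum hall
      have h3 : (m + 2) * (m + 1) = m ^ 2 + 3 * m + 2 := by ring
      omega
    refine ⟨hδp, ?_, ?_⟩
    · intro i
      show δ i ≤ μ i
      simp only [μ]
      split_ifs with h1 h2
      · -- i < m + 1 : δ i ≤ δ 0 ≤ lam 0 ≤ m + 2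
        have hlam0le : lam 0 ≤ m + 2 := by
          simp only [lam]; split_ifs <;> omega
        have := le_trans (hδp.1 (Nat.zero_le i)) (le_trans (hle 0) hlam0le)
        omega
      · have : δ i ≤ m := h2 ▸ hkey
        omega
      · exact le_of_eq (hδ0 i (by omega))
    · rw [hμsum, psize_eq_sum_range δ (m + 2) hδ0, hδsum]
      omega
end

section
/- Let λ be a partition with λ_k ≥ k (λ contains cell (k,k)) and with at least 2k cells outside the k×k square. Then λ has a k-deletion δ with δ_k ≥ k, i.e., a k-deletion still containing the cell (k,k). -/
lemma psize_eq_sum {f : ℕ → ℕ} {N : ℕ} (h : ∀ i, f i ≠ 0 → i < N) :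
    psize f = ∑ i ∈ Finset.range N, f i := by
  apply finsum_eq_finset_sum_of_support_subset
  intro i hi
  simp only [Finset.coe_range, Set.mem_Iio]
  exact h i hi

lemma exists_deletion (k : ℕ) : ∀ (f : ℕ → ℕ), IsPartition f → k ≤ psize f →
    ∃ δ, IsDeletion k δ f := by
  induction k with
  | zero => exact fun f hf _ => ⟨f, hf, fun i => le_rfl, rfl⟩
  | succ k ih =>
    intro f hf hle
    have hfin := hf.2
    have hsub : Function.support f ⊆ ↑hfin.toFinset := by
      intro i hi; simpa using hi
    have hsum : psize f = ∑ i ∈ hfin.toFinset, f i :=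
      finsum_eq_finset_sum_of_support_subset _ hsub
    have hne : hfin.toFinset.Nonempty := by
      by_contra h
      rw [Finset.not_nonempty_iff_eq_empty] at h
      rw [h, Finset.sum_empty] at hsum
      omega
    set n := hfin.toFinset.max' hne with hn
    have hfn : f n ≠ 0 := by
      have := hfin.toFinset.max'_mem hne
      simpa using this
    have hgt : ∀ j, n < j → f j = 0 := by
      intro j hj
      by_contra h
      have hjm : j ∈ hfin.toFinset := by simpa using h
      exact absurd (hfin.toFinset.le_max' j hjm) (by omega)
    set g := Function.update f n (f n - 1) with hg
    have hgval : ∀ i, g i = if i = n then f n - 1 else f i := by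
      intro i; by_cases h : i = n <;> simp [hg, Function.update, h]
    have hgle : ∀ i, g i ≤ f i := by
      intro i
      rcases eq_or_ne i n with rfl | h
      · rw [hgval, if_pos rfl]; omega
      · rw [hgval, if_neg h]
    have hganti : ∀ ⦃i j : ℕ⦄, i ≤ j → g j ≤ g i := by
      intro i j hij
      rcases eq_or_ne i n with rfl | hin
      · rcases eq_or_ne j n with rfl | hjn
        · rfl
        · have hnj : n < j := lt_of_le_of_ne hij (Ne.symm hjn)
          rw [hgval, hgval, if_neg hjn, if_pos rfl, hgt j hnj]
          omega
      · calc g j ≤ f j := hgle j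
          _ ≤ f i := hf.1 hij
          _ = g i := by rw [hgval, if_neg hin]
    have hgfin : {i | g i ≠ 0}.Finite := by
      apply hfin.subset
      intro i hi
      simp only [Set.mem_setOf_eq] at hi ⊢
      rw [hgval] at hi
      by_cases h : i = n
      · subst h; exact hfn
      · rwa [if_neg h] at hi
    have hgsum : psize g = ∑ i ∈ hfin.toFinset, g i := by
      apply finsum_eq_finset_sum_of_support_subset
      intro i hi
      simp only [Function.mem_support] at hi
      rw [hgval] at hi
      by_cases h : i = n
      · subst h; simpa using hfn
      · rw [if_neg h] at hi; simpa using hi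
    have hstep : psize f = psize g + 1 := by
      rw [hsum, hgsum]
      have : ∀ i ∈ hfin.toFinset, f i = g i + (if i = n then 1 else 0) := by
        intro i _
        rw [hgval]
        by_cases h : i = n <;> simp [h] <;> omega
      rw [Finset.sum_congr rfl this, Finset.sum_add_distrib,
        Finset.sum_ite_eq' hfin.toFinset n (fun _ => 1),
        if_pos (hfin.toFinset.max'_mem hne)]
    obtain ⟨δ, hδp, hδle, hδs⟩ := ih g ⟨hganti, hgfin⟩ (by omega)
    exact ⟨δ, hδp, fun i => le_trans (hδle i) (hgle i), by omega⟩

/-- If λ contains (k,k) and has ≥ 2k cells outside the k×k square, then λ has a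
k-deletion still containing the cell (k,k). -/
theorem deletion_keeping_square (k : ℕ) (hk : 1 ≤ k) (f : ℕ → ℕ)
    (hf : IsPartition f) (hcell : k ≤ f (k - 1))
    (hout : 2 * k ≤ psize f - ∑ᶠ i ∈ Set.Iio k, min (f i) k) :
    ∃ δ : ℕ → ℕ, IsDeletion k δ f ∧ k ≤ δ (k - 1) := by
  -- every row below k has at least k cells
  have hrow : ∀ i, i < k → k ≤ f i := fun i hi =>
    le_trans hcell (hf.1 (by omega))
  -- the square term is k*k
  have hsq : ∑ᶠ i ∈ Set.Iio k, min (f i) k = k * k := by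
    rw [← Finset.coe_range, finsum_mem_coe_finset]
    have : ∀ i ∈ Finset.range k, min (f i) k = k := by
      intro i hi
      exact min_eq_right (hrow i (Finset.mem_range.mp hi))
    rw [Finset.sum_congr rfl this, Finset.sum_const, Finset.card_range, smul_eq_mul]
  -- a bound N beyond which f vanishes
  set N : ℕ := max k (hf.2.toFinset.sup id + 1) with hN
  have hkN : k ≤ N := le_max_left _ _
  have hvanish : ∀ i, f i ≠ 0 → i < N := by
    intro i hi
    have : i ∈ hf.2.toFinset := by simpa using hi
    have := Finset.le_sup (f := id) this
    simp only [id] at this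
    omega
  have hvanish' : ∀ i, N ≤ i → f i = 0 := by
    intro i hi; by_contra h; exact absurd (hvanish i h) (by omega)
  set A : ℕ := ∑ i ∈ Finset.range k, (f i - k) with hA
  set B : ℕ := ∑ i ∈ Finset.Ico k N, f i with hB
  have hsplit : psize f = ∑ i ∈ Finset.range k, f i + B := by
    rw [psize_eq_sum hvanish, hB, Finset.range_eq_Ico, Finset.range_eq_Ico]
    exact (Finset.sum_Ico_consecutive f (Nat.zero_le k) hkN).symm
  have hArow : ∑ i ∈ Finset.range k, f i = k * k + A := by
    have : ∀ i ∈ Finset.range k, f i = k + (f i - k) := by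
      intro i hi
      have := hrow i (Finset.mem_range.mp hi)
      omega
    rw [Finset.sum_congr rfl this, Finset.sum_add_distrib, Finset.sum_const,
      Finset.card_range, smul_eq_mul, hA]
  have hpf : psize f = k * k + A + B := by omega
  have hAB : 2 * k ≤ A + B := by
    rw [hsq, hpf] at hout; omega
  by_cases hBk : k ≤ B
  · -- delete from the tail rows (rows ≥ k)
    set t : ℕ → ℕ := fun i => f (k + i) with ht
    have htpart : IsPartition t := by
      constructor
      · intro i j hij; exact hf.1 (by omega)
      · apply Set.Finite.subset (Set.finite_Iio (N - k))
        intro i hi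
        simp only [Set.mem_setOf_eq, ht] at hi
        have := hvanish _ hi
        simp only [Set.mem_Iio]
        omega
    have htsum : psize t = B := by
      rw [psize_eq_sum (f := t) (N := N - k) (fun i hi => by
        have := hvanish _ hi; omega), hB, Finset.sum_Ico_eq_sum_range]
    obtain ⟨δt, hδtp, hδtle, hδts⟩ := exists_deletion k t htpart
      (le_of_le_of_eq hBk htsum.symm)
    set δ : ℕ → ℕ := fun i => if i < k then f i else δt (i - k) with hδ
    have hδle : ∀ i, δ i ≤ f i := by
      intro i
      simp only [hδ]
      split
      · exact le_rfl
      · rename_i h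
        calc δt (i - k) ≤ t (i - k) := hδtle _
          _ = f i := by show f (k + (i - k)) = f i; congr 1; omega
    have hδanti : ∀ ⦃i j : ℕ⦄, i ≤ j → δ j ≤ δ i := by
      intro i j hij
      simp only [hδ]
      split <;> split
      · exact hf.1 hij
      · omega
      · rename_i hj hi
        calc δt (j - k) ≤ δt 0 := hδtp.1 (Nat.zero_le _)
          _ ≤ t 0 := hδtle 0
          _ = f (k + 0) := rfl
          _ ≤ f i := hf.1 (by omega)
      · exact hδtp.1 (by omega)
    have hδfin : {i | δ i ≠ 0}.Finite := by
      apply hf.2.subset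
      intro i hi
      simp only [Set.mem_setOf_eq] at hi ⊢
      intro h
      exact hi (Nat.le_zero.mp (h ▸ hδle i))
    have hδvan : ∀ i, δ i ≠ 0 → i < N := fun i hi =>
      hvanish i (fun h => hi (Nat.le_zero.mp (h ▸ hδle i)))
    have hδtvan : ∀ i, δt i ≠ 0 → i < N - k := by
      intro i hi
      have : t i ≠ 0 := fun h => hi (Nat.le_zero.mp (h ▸ hδtle i))
      have := hvanish _ this
      omega
    have hδsum : psize δ = ∑ i ∈ Finset.range k, f i + psize δt := by
      rw [psize_eq_sum hδvan, psize_eq_sum hδtvan]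
      have h1 : ∑ i ∈ Finset.range N, δ i
          = ∑ i ∈ Finset.Ico 0 k, δ i + ∑ i ∈ Finset.Ico k N, δ i := by
        rw [Finset.range_eq_Ico]
        exact (Finset.sum_Ico_consecutive _ (Nat.zero_le k) hkN).symm
      rw [h1, ← Finset.range_eq_Ico, Finset.sum_Ico_eq_sum_range]
      congr 1
      · apply Finset.sum_congr rfl
        intro i hi
        simp only [hδ, if_pos (Finset.mem_range.mp hi)]
      · apply Finset.sum_congr rfl
        intro i _
        simp only [hδ, if_neg (by omega : ¬ k + i < k)]
        congr 1
        omega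
    refine ⟨δ, ⟨⟨hδanti, hδfin⟩, hδle, ?_⟩, ?_⟩
    · rw [hδsum, hsplit, ← htsum, hδts]; ring
    · simp only [hδ, if_pos (by omega : k - 1 < k)]
      exact hcell
  · -- delete from the arm (columns ≥ k of rows < k)
    have hfk : f k < k := by
      rcases lt_or_ge k N with h | h
      · have : f k ≤ B := Finset.single_le_sum (f := f) (fun i _ => Nat.zero_le _)
          (Finset.mem_Ico.mpr ⟨le_rfl, h⟩)
        omega
      · have := hvanish' k h
        omega
    set g : ℕ → ℕ := fun i => if i < k then f i - k else 0 with hg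
    have hgpart : IsPartition g := by
      constructor
      · intro i j hij
        simp only [hg]
        split <;> split
        · exact Nat.sub_le_sub_right (hf.1 hij) k
        · omega
        · exact Nat.zero_le _
        · exact le_rfl
      · apply Set.Finite.subset (Set.finite_Iio k)
        intro i hi
        simp only [Set.mem_setOf_eq, hg] at hi
        by_contra h
        simp only [Set.mem_Iio, not_lt] at h
        rw [if_neg (by omega)] at hi
        exact hi rfl
    have hgsum : psize g = A := by
      rw [psize_eq_sum (f := g) (N := k) (fun i hi => by
        by_contra h
        simp only [hg, if_neg h] at hi
        exact hi rfl), hA]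
      apply Finset.sum_congr rfl
      intro i hi
      simp only [hg, if_pos (Finset.mem_range.mp hi)]
    obtain ⟨δg, hδgp, hδgle, hδgs⟩ := exists_deletion k g hgpart (by omega)
    set δ : ℕ → ℕ := fun i => if i < k then δg i + k else f i with hδ
    have hδle : ∀ i, δ i ≤ f i := by
      intro i
      simp only [hδ]
      split
      · rename_i h
        have h1 := hδgle i
        simp only [hg, if_pos h] at h1
        have := hrow i h
        omega
      · exact le_rfl
    have hδanti : ∀ ⦃i j : ℕ⦄, i ≤ j → δ j ≤ δ i := by
      intro i j hij
      simp only [hδ]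
      split <;> split
      · have := hδgp.1 hij; omega
      · omega
      · rename_i hj hi
        have : f j ≤ f k := hf.1 (by omega)
        omega
      · exact hf.1 hij
    have hδfin : {i | δ i ≠ 0}.Finite := by
      apply hf.2.subset
      intro i hi
      simp only [Set.mem_setOf_eq] at hi ⊢
      intro h
      exact hi (Nat.le_zero.mp (h ▸ hδle i))
    have hδvan : ∀ i, δ i ≠ 0 → i < N := fun i hi =>
      hvanish i (fun h => hi (Nat.le_zero.mp (h ▸ hδle i)))
    have hδgvan : ∀ i, δg i ≠ 0 → i < k := by
      intro i hi
      by_contra h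
      have h1 := hδgle i
      simp only [hg, if_neg h] at h1
      omega
    have hδsum : psize δ = (psize δg + k * k) + B := by
      rw [psize_eq_sum hδvan, psize_eq_sum hδgvan]
      have h1 : ∑ i ∈ Finset.range N, δ i
          = ∑ i ∈ Finset.Ico 0 k, δ i + ∑ i ∈ Finset.Ico k N, δ i := by
        rw [Finset.range_eq_Ico]
        exact (Finset.sum_Ico_consecutive _ (Nat.zero_le k) hkN).symm
      rw [h1, ← Finset.range_eq_Ico, hB]
      congr 1
      · have h2 : ∀ i ∈ Finset.range k, δ i = δg i + k := by
          intro i hi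
          simp only [hδ, if_pos (Finset.mem_range.mp hi)]
        rw [Finset.sum_congr rfl h2, Finset.sum_add_distrib, Finset.sum_const,
          Finset.card_range, smul_eq_mul]
      · apply Finset.sum_congr rfl
        intro i hi
        have := (Finset.mem_Ico.mp hi).1
        simp only [hδ, if_neg (by omega : ¬ i < k)]
    refine ⟨δ, ⟨⟨hδanti, hδfin⟩, hδle, ?_⟩, ?_⟩
    · rw [hδsum, hpf, ← hgsum, hδgs]; ring
    · simp only [hδ, if_pos (by omega : k - 1 < k)]
      omega
end
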